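/- Let A ∈ B^{n×n}, λ ∈ B, K, L a partition of N = {1,...,n}, with L_2, L̃, Λ, and (A_{KK})^*_λ as defined. Set Ñ = L̃ ∪ K, let A' ∈ B^{L_2×Ñ} be the matrix whose columns indexed by L̃ are those of A_{L_2 K} ⊗ (A_{KK})^* ⊗ A_{K L̃} ⊗ Λ_{L̃,L̃} and whose columns indexed by K are those of A_{L_2 K} ⊗ (A_{KK})^*_λ, let b' = λ ⊗ A_{L_2 K} ⊗ (A_{KK})^* ⊗ A_{KL} ⊗ 1_L ∈ B^{L_2}, let I_0 = { i ∈ L_2 : b'_i < λ } and C_j = { i ∈ I_0 : A'_{ij} = λ } for j ∈ Ñ. Then a (K,L) λ-eigenvector of A exists if and only if I_0 = ∪_{j∈Ñ} C_j. -/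
import Mathlib


noncomputable section

/-- The max-min algebra: the unit interval `[0,1] ⊆ ℝ` with `⊕ = max = ⊔` and `⊗ = min = ⊓`. -/
abbrev B : Type := unitInterval

instance : Fact ((0:ℝ) ≤ 1) := ⟨zero_le_one⟩

/-- Max-min matrix-vector product: `(A ⊗ x)_i = max_j min (A i j) (x j)`. -/
def mmVec {α β : Type*} (A : Matrix α β B) (x : β → B) : α → B :=
  fun i => ⨆ j, A i j ⊓ x j

/-- Max-min matrix-matrix product. -/
def mmMul {α β γ : Type*} (A : Matrix α β B) (C : Matrix β γ B) : Matrix α γ B :=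
  fun i k => ⨆ j, A i j ⊓ C j k

/-- The max-min identity matrix. -/
def mmId (α : Type*) [DecidableEq α] : Matrix α α B :=
  fun i j => if i = j then 1 else 0

/-- Max-min matrix powers, `A^0 = I`. -/
def mmPow {α : Type*} [DecidableEq α] (A : Matrix α α B) : ℕ → Matrix α α B
  | 0 => mmId α
  | k + 1 => mmMul A (mmPow A k)

/-- The metric matrix `A⁺ = A ⊕ A² ⊕ ... ⊕ Aⁿ`. -/
def mmPlus {α : Type*} [Fintype α] [DecidableEq α] (A : Matrix α α B) : Matrix α α B :=
  fun i j => ⨆ k ∈ Finset.Icc 1 (Fintype.card α), mmPow A k i j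

/-- The Kleene star `A* = I ⊕ A ⊕ ... ⊕ A^{n-1}`. -/
def mmStar {α : Type*} [Fintype α] [DecidableEq α] (A : Matrix α α B) : Matrix α α B :=
  fun i j => ⨆ k ∈ Finset.range (Fintype.card α), mmPow A k i j

/-- The matrix `A*_λ`, whose `i`-th column has entries `min (λ, (A⁺)_{ii}, (A*)_{ki})`. -/
def mmStarLam {α : Type*} [Fintype α] [DecidableEq α] (A : Matrix α α B) (lam : B) :
    Matrix α α B :=
  fun k i => lam ⊓ mmPlus A i i ⊓ mmStar A k i

/-- Submatrix of `A` with rows in `P` and columns in `Q`. -/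
def subM {n : ℕ} (A : Matrix (Fin n) (Fin n) B) (P Q : Finset (Fin n)) :
    Matrix ↥P ↥Q B :=
  fun i j => A i j

/-- Subvector of `x` indexed by `P`. -/
def subV {n : ℕ} (x : Fin n → B) (P : Finset (Fin n)) : ↥P → B :=
  fun i => x i

/-- `x` is a `(K,L)` `λ`-eigenvector of `A`: `A ⊗ x = λ ⊗ x`, `x_i ≤ λ` for `i ∈ K`,
`x_i ≥ λ` for `i ∈ L`. -/
def IsKLEig {n : ℕ} (A : Matrix (Fin n) (Fin n) B) (lam : B) (K L : Finset (Fin n))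
    (x : Fin n → B) : Prop :=
  mmVec A x = (fun i => lam ⊓ x i) ∧ (∀ i ∈ K, x i ≤ lam) ∧ (∀ i ∈ L, lam ≤ x i)

/-- `L₁ = {i ∈ L : max_{j∈L} a_{ij} ≥ λ}`. -/
def L1set {n : ℕ} (A : Matrix (Fin n) (Fin n) B) (lam : B) (L : Finset (Fin n)) :
    Finset (Fin n) :=
  L.filter fun i => lam ≤ ⨆ j ∈ L, A i j

/-- `L₂ = {i ∈ L : max_{j∈L} a_{ij} < λ}`. -/
def L2set {n : ℕ} (A : Matrix (Fin n) (Fin n) B) (lam : B) (L : Finset (Fin n)) :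
    Finset (Fin n) :=
  L.filter fun i => (⨆ j ∈ L, A i j) < lam

/-- `L^{>λ,L₁} = {k ∈ L : max_{i ∈ L₁} a_{ik} > λ}`. -/
def LgtL1set {n : ℕ} (A : Matrix (Fin n) (Fin n) B) (lam : B) (L : Finset (Fin n)) :
    Finset (Fin n) :=
  L.filter fun k => lam < ⨆ i ∈ L1set A lam L, A i k

/-- `L^{>λ,K} = {ℓ ∈ L : max_{k ∈ K} ((A_{KK})* ⊗ A_{KL})_{kℓ} > λ}`. (The matrix
`(A_{KK})* ⊗ A_{K,N}` has, for `ℓ ∈ L`, exactly the same entries in column `ℓ` as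
`(A_{KK})* ⊗ A_{KL}`.) -/
def LgtKset {n : ℕ} (A : Matrix (Fin n) (Fin n) B) (lam : B) (K L : Finset (Fin n)) :
    Finset (Fin n) :=
  L.filter fun ℓ =>
    lam < ⨆ k : ↥K, mmMul (mmStar (subM A K K)) (fun (p : ↥K) (q : Fin n) => A p q) k ℓ

/-- `L' = L^{>λ,L₁} ∪ L^{>λ,K}`. -/
def LprimeSet {n : ℕ} (A : Matrix (Fin n) (Fin n) B) (lam : B) (K L : Finset (Fin n)) :
    Finset (Fin n) :=
  LgtL1set A lam L ∪ LgtKset A lam K L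

/-- `L̃ = L \ L'`. -/
def LtilSet {n : ℕ} (A : Matrix (Fin n) (Fin n) B) (lam : B) (K L : Finset (Fin n)) :
    Finset (Fin n) :=
  L \ LprimeSet A lam K L

/-- The submatrix `Λ_{P,Q}` of the matrix `Λ` with `Λ_{ii} = 1` and `Λ_{ij} = λ` for `i ≠ j`. -/
def LamSub {n : ℕ} (lam : B) (P Q : Finset (Fin n)) : Matrix ↥P ↥Q B :=
  fun p q => if (p : Fin n) = (q : Fin n) then 1 else lam

/-- `Ñ = L̃ ∪ K`. -/
def NtilSet {n : ℕ} (A : Matrix (Fin n) (Fin n) B) (lam : B) (K L : Finset (Fin n)) :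
    Finset (Fin n) :=
  LtilSet A lam K L ∪ K

/-- The matrix `A' ∈ B^{L₂ × Ñ}`: its columns indexed by `L̃` are those of
`A_{L₂K} ⊗ (A_{KK})* ⊗ A_{KL̃} ⊗ Λ_{L̃,L̃}` and its columns indexed by `K` are those of
`A_{L₂K} ⊗ (A_{KK})*_λ`. -/
def Aprime {n : ℕ} (A : Matrix (Fin n) (Fin n) B) (lam : B) (K L : Finset (Fin n)) :
    Matrix ↥(L2set A lam L) ↥(NtilSet A lam K L) B :=
  fun i j =>
    if h : (j : Fin n) ∈ LtilSet A lam K L then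
      mmMul (mmMul (mmMul (subM A (L2set A lam L) K) (mmStar (subM A K K)))
        (subM A K (LtilSet A lam K L)))
        (LamSub lam (LtilSet A lam K L) (LtilSet A lam K L)) i ⟨(j : Fin n), h⟩
    else
      mmMul (subM A (L2set A lam L) K) (mmStarLam (subM A K K) lam) i
        ⟨(j : Fin n), (Finset.mem_union.mp j.2).resolve_left h⟩

/-- The vector `b' = λ ⊗ A_{L₂K} ⊗ (A_{KK})* ⊗ A_{KL} ⊗ 1_L ∈ B^{L₂}`. -/
def bprime {n : ℕ} (A : Matrix (Fin n) (Fin n) B) (lam : B) (K L : Finset (Fin n)) :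
    ↥(L2set A lam L) → B :=
  fun i => lam ⊓
    mmVec (mmMul (mmMul (subM A (L2set A lam L) K) (mmStar (subM A K K))) (subM A K L))
      (fun _ => 1) i

/-- `I₀ = {i ∈ L₂ : b'_i < λ}`. -/
def I0set {n : ℕ} (A : Matrix (Fin n) (Fin n) B) (lam : B) (K L : Finset (Fin n)) :
    Set ↥(L2set A lam L) :=
  {i | bprime A lam K L i < lam}

/-- `C_j = {i ∈ I₀ : A'_{ij} = λ}` for `j ∈ Ñ`. -/
def CsetKL {n : ℕ} (A : Matrix (Fin n) (Fin n) B) (lam : B) (K L : Finset (Fin n))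
    (j : ↥(NtilSet A lam K L)) : Set ↥(L2set A lam L) :=
  {i | bprime A lam K L i < lam ∧ Aprime A lam K L i j = lam}

/-! ### Auxiliary development -/

section MaxMinHelpers

open Finset

lemma B_one_top : (1:B) = ⊤ := rfl
lemma B_zero_bot : (0:B) = ⊥ := rfl
lemma B_le_one (a : B) : a ≤ 1 := B_one_top ▸ le_top

lemma iSup_exists_le {ι : Type*} [Fintype ι] {f : ι → B} {a : B}
    (ha : ⊥ < a) (h : a ≤ ⨆ i, f i) : ∃ i, a ≤ f i := by
  rcases isEmpty_or_nonempty ι with h'|h'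
  · rw [iSup_of_empty] at h
    exact absurd (le_bot_iff.mp h) (ne_of_gt ha)
  · obtain ⟨i, hi⟩ := exists_eq_ciSup_of_finite (f := f)
    exact ⟨i, hi ▸ h⟩

lemma iSup_lt_of_lt {ι : Type*} [Fintype ι] {f : ι → B} {a : B}
    (ha : ⊥ < a) (h : ∀ i, f i < a) : (⨆ i, f i) < a := by
  rcases isEmpty_or_nonempty ι with h'|h'
  · rw [iSup_of_empty]; exact ha
  · obtain ⟨i, hi⟩ := exists_eq_ciSup_of_finite (f := f)
    rw [← hi]; exact h i

variable {α β γ δ : Type*}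

lemma mmMul_assoc (A : Matrix α β B) (C : Matrix β γ B) (D : Matrix γ δ B) :
    mmMul (mmMul A C) D = mmMul A (mmMul C D) := by
  funext i l
  simp only [mmMul, iSup_inf_eq, inf_iSup_eq]
  rw [iSup_comm]
  simp only [inf_assoc]

lemma mmVec_mmMul (A : Matrix α β B) (C : Matrix β γ B) (x : γ → B) :
    mmVec (mmMul A C) x = mmVec A (mmVec C x) := by
  funext i
  simp only [mmVec, mmMul, iSup_inf_eq, inf_iSup_eq]
  rw [iSup_comm]
  simp only [inf_assoc]

lemma mmVec_id [DecidableEq α] (x : α → B) : mmVec (mmId α) x = x := by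
  funext i
  apply le_antisymm
  · refine iSup_le fun j => ?_
    by_cases h : i = j
    · subst h; simp [mmId]
    · simp [mmId, h, B_zero_bot]
  · refine le_iSup_of_le i ?_
    simp [mmId, B_one_top]

lemma mmMul_id [DecidableEq β] (A : Matrix α β B) : mmMul A (mmId β) = A := by
  funext i k
  apply le_antisymm
  · refine iSup_le fun j => ?_
    by_cases h : j = k
    · subst h; simp [mmId]
    · simp [mmId, h, B_zero_bot]
  · refine le_iSup_of_le k ?_
    simp [mmId, B_one_top]

lemma id_mmMul [DecidableEq α] (A : Matrix α β B) : mmMul (mmId α) A = A := by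
  funext i k
  apply le_antisymm
  · refine iSup_le fun j => ?_
    by_cases h : i = j
    · subst h; simp [mmId]
    · simp [mmId, h, B_zero_bot]
  · refine le_iSup_of_le i ?_
    simp [mmId, B_one_top]

lemma mmVec_mono (A : Matrix α β B) {x y : β → B} (h : ∀ j, x j ≤ y j) (i : α) :
    mmVec A x i ≤ mmVec A y i :=
  iSup_mono fun j => inf_le_inf_left _ (h j)

lemma mmVec_le (A : Matrix α β B) {x : β → B} {c : B} (h : ∀ j, x j ≤ c) (i : α) :
    mmVec A x i ≤ c :=
  iSup_le fun j => le_trans inf_le_right (h j)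

lemma mmVec_sup (A : Matrix α β B) (x y : β → B) :
    mmVec A (fun j => x j ⊔ y j) = fun i => mmVec A x i ⊔ mmVec A y i := by
  funext i
  simp only [mmVec, inf_sup_left, iSup_sup_eq]

lemma mmVec_scalar (A : Matrix α β B) (lam : B) (x : β → B) :
    mmVec A (fun j => lam ⊓ x j) = fun i => lam ⊓ mmVec A x i := by
  funext i
  simp only [mmVec, inf_iSup_eq]
  exact iSup_congr fun j => inf_left_comm _ _ _

lemma mmPow_one [DecidableEq α] (A : Matrix α α B) : mmPow A 1 = A := by
  show mmMul A (mmId α) = A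
  exact mmMul_id A

lemma mmPow_add [DecidableEq α] (A : Matrix α α B) (s t : ℕ) :
    mmPow A (s + t) = mmMul (mmPow A s) (mmPow A t) := by
  induction s with
  | zero =>
      rw [Nat.zero_add]
      show mmPow A t = mmMul (mmId α) (mmPow A t)
      rw [id_mmMul]
  | succ s ih =>
      have e : s + 1 + t = (s + t) + 1 := by omega
      rw [e]
      show mmMul A (mmPow A (s + t)) = mmMul (mmMul A (mmPow A s)) (mmPow A t)
      rw [ih, mmMul_assoc]

lemma mmPow_succ_right [DecidableEq α] (A : Matrix α α B) (t : ℕ) :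
    mmPow A (t + 1) = mmMul (mmPow A t) A := by
  rw [mmPow_add A t 1, mmPow_one]

end MaxMinHelpers
section PathMachinery

open Finset

variable {α : Type*} [DecidableEq α]

/-- Weight of the length-`t` path `f 0, f 1, ..., f t`. -/
def pathW (A : Matrix α α B) (f : ℕ → α) (t : ℕ) : B :=
  ⨅ s ∈ Finset.range t, A (f s) (f (s + 1))

lemma pathW_le_edge (A : Matrix α α B) (f : ℕ → α) {t s : ℕ} (h : s < t) :
    pathW A f t ≤ A (f s) (f (s + 1)) :=
  biInf_le _ (Finset.mem_range.mpr h)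

lemma pathW_le_pow (A : Matrix α α B) (f : ℕ → α) {t : ℕ} :
    ∀ (d a : ℕ), a + d ≤ t → pathW A f t ≤ mmPow A d (f a) (f (a + d))
  | 0, a, _ => by
      show pathW A f t ≤ mmId α (f a) (f a)
      simp [mmId, B_one_top]
  | d + 1, a, h => by
      have h1 : a < t := by omega
      have h2 : (a + 1) + d ≤ t := by omega
      have ih := pathW_le_pow A f d (a + 1) h2
      show pathW A f t ≤ ⨆ z, A (f a) z ⊓ mmPow A d z (f (a + (d + 1)))
      refine le_iSup_of_le (f (a + 1)) (le_inf (pathW_le_edge A f h1) ?_)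
      have e : a + (d + 1) = (a + 1) + d := by omega
      rw [e]
      exact ih

lemma pow_le_pathW (A : Matrix α α B) :
    ∀ (t : ℕ) (i j : α),
      mmPow A t i j ≤ ⨆ f : {f : ℕ → α // f 0 = i ∧ f t = j}, pathW A f.1 t
  | 0, i, j => by
      by_cases h : i = j
      · subst h
        have hp : pathW A (fun _ => i) 0 = ⊤ := by simp [pathW]
        refine le_trans le_top ?_
        rw [← hp]
        exact le_iSup (fun f : {f : ℕ → α // f 0 = i ∧ f 0 = i} => pathW A f.1 0)
          ⟨fun _ => i, rfl, rfl⟩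
      · show mmId α i j ≤ _
        simp [mmId, h, B_zero_bot]
  | t + 1, i, j => by
      show (⨆ z, A i z ⊓ mmPow A t z j) ≤ _
      refine iSup_le fun z => ?_
      refine le_trans (inf_le_inf_left (A i z) (pow_le_pathW A t z j)) ?_
      rw [inf_iSup_eq]
      refine iSup_le fun g => ?_
      classical
      set f : ℕ → α := fun s => Nat.rec z (fun s' _ => g.1 s') s with hf
      have hf0 : f 0 = z := rfl
      have hfs : ∀ s, f (s + 1) = g.1 s := fun _ => rfl
      have hkey : A i z ⊓ pathW A g.1 t ≤ pathW A (fun s => Nat.rec i (fun s' _ => g.1 s') s) (t + 1) := by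
        refine le_iInf₂ fun s hs => ?_
        cases s with
        | zero =>
            have : g.1 0 = z := g.2.1
            show A i z ⊓ pathW A g.1 t ≤ A i (g.1 0)
            rw [this]; exact inf_le_left
        | succ s' =>
            have hs' : s' < t := by
              have := Finset.mem_range.mp hs; omega
            show A i z ⊓ pathW A g.1 t ≤ A (g.1 s') (g.1 (s' + 1))
            exact le_trans inf_le_right (pathW_le_edge A g.1 hs')
      refine le_trans hkey (le_iSup_of_le ⟨fun s => Nat.rec i (fun s' _ => g.1 s') s, rfl, g.2.2⟩ le_rfl)

end PathMachinery
section PathMachinery2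

open Finset

variable {α : Type*} [DecidableEq α] [Fintype α]

lemma le_mmStar_of (A : Matrix α α B) {s : ℕ} (h : s < Fintype.card α) (k p : α) :
    mmPow A s k p ≤ mmStar A k p := by
  show _ ≤ ⨆ t ∈ Finset.range (Fintype.card α), mmPow A t k p
  exact le_biSup (fun t => mmPow A t k p) (Finset.mem_range.mpr h)

lemma le_mmPlus_of (A : Matrix α α B) {s : ℕ} (h1 : 1 ≤ s) (h2 : s ≤ Fintype.card α) (k p : α) :
    mmPow A s k p ≤ mmPlus A k p := by
  show _ ≤ ⨆ t ∈ Finset.Icc 1 (Fintype.card α), mmPow A t k p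
  exact le_biSup (fun t => mmPow A t k p) (Finset.mem_Icc.mpr ⟨h1, h2⟩)

lemma path_card_le_star (A : Matrix α α B) {k p : α} (f : ℕ → α)
    (hk : f 0 = k) (hp : f (Fintype.card α) = p) :
    pathW A f (Fintype.card α) ≤ mmStar A k p := by
  obtain ⟨a, b, hne, heq⟩ := Fintype.exists_ne_map_eq_of_card_lt
    (fun s : Fin (Fintype.card α + 1) => f s)
    (by simp)
  wlog hab : (a : ℕ) < (b : ℕ) generalizing a b
  · have hv : (a : ℕ) ≠ (b : ℕ) := fun h => hne (Fin.ext h)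
    exact this b a hne.symm heq.symm (by omega)
  have hbm : (b : ℕ) ≤ Fintype.card α := by omega
  have seg1 : pathW A f (Fintype.card α) ≤ mmPow A (a : ℕ) k (f a) := by
    have h1 := pathW_le_pow A f (t := Fintype.card α) (a : ℕ) 0 (by omega)
    rw [Nat.zero_add] at h1
    rw [← hk]; exact h1
  have seg2 : pathW A f (Fintype.card α) ≤ mmPow A (Fintype.card α - (b : ℕ)) (f a) p := by
    have h2 := pathW_le_pow A f (t := Fintype.card α) (Fintype.card α - (b : ℕ)) (b : ℕ) (by omega)
    have e : (b : ℕ) + (Fintype.card α - (b : ℕ)) = Fintype.card α := by omega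
    rw [e, hp] at h2
    rw [heq]; exact h2
  have comb : pathW A f (Fintype.card α) ≤ mmPow A ((a : ℕ) + (Fintype.card α - (b : ℕ))) k p := by
    rw [mmPow_add]
    exact le_iSup_of_le (f a) (le_inf seg1 seg2)
  exact le_trans comb (le_mmStar_of A (by omega) k p)

lemma path_card_le_wmax (A : Matrix α α B) {k : α} (f : ℕ → α)
    (hk : f 0 = k) :
    pathW A f (Fintype.card α) ≤ ⨆ i, mmStar A k i ⊓ mmPlus A i i := by
  obtain ⟨a, b, hne, heq⟩ := Fintype.exists_ne_map_eq_of_card_lt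
    (fun s : Fin (Fintype.card α + 1) => f s)
    (by simp)
  wlog hab : (a : ℕ) < (b : ℕ) generalizing a b
  · have hv : (a : ℕ) ≠ (b : ℕ) := fun h => hne (Fin.ext h)
    exact this b a hne.symm heq.symm (by omega)
  have hbm : (b : ℕ) ≤ Fintype.card α := by omega
  have seg1 : pathW A f (Fintype.card α) ≤ mmStar A k (f a) := by
    have h1 := pathW_le_pow A f (t := Fintype.card α) (a : ℕ) 0 (by omega)
    rw [Nat.zero_add] at h1
    rw [← hk]
    exact le_trans h1 (le_mmStar_of A (by omega) (f 0) (f (a:ℕ)))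
  have seg2 : pathW A f (Fintype.card α) ≤ mmPlus A (f a) (f a) := by
    have h2 := pathW_le_pow A f (t := Fintype.card α) ((b : ℕ) - (a : ℕ)) (a : ℕ) (by omega)
    have e : (a : ℕ) + ((b : ℕ) - (a : ℕ)) = (b : ℕ) := by omega
    rw [e, ← heq] at h2
    exact le_trans h2 (le_mmPlus_of A (by omega) (by omega) (f (a:ℕ)) (f (a:ℕ)))
  exact le_iSup_of_le (f a) (le_inf seg1 seg2)

lemma pow_card_le_star (A : Matrix α α B) (k p : α) :
    mmPow A (Fintype.card α) k p ≤ mmStar A k p :=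
  le_trans (pow_le_pathW A _ k p)
    (iSup_le fun f => path_card_le_star A f.1 f.2.1 f.2.2)

lemma pow_card_le_wmax (A : Matrix α α B) (k p : α) :
    mmPow A (Fintype.card α) k p ≤ ⨆ i, mmStar A k i ⊓ mmPlus A i i :=
  le_trans (pow_le_pathW A _ k p)
    (iSup_le fun f => path_card_le_wmax A f.1 f.2.1)

lemma pow_le_star (A : Matrix α α B) {t : ℕ} (ht : t ≤ Fintype.card α) (k p : α) :
    mmPow A t k p ≤ mmStar A k p := by
  rcases lt_or_eq_of_le ht with h | h
  · exact le_mmStar_of A h k p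
  · subst h; exact pow_card_le_star A k p

lemma plus_le_star (A : Matrix α α B) (k p : α) : mmPlus A k p ≤ mmStar A k p :=
  iSup₂_le fun s hs => pow_le_star A (Finset.mem_Icc.mp hs).2 k p

lemma star_eq_sup (A : Matrix α α B) (k p : α) :
    mmStar A k p = mmId α k p ⊔ mmPlus A k p := by
  apply le_antisymm
  · refine iSup₂_le fun s hs => ?_
    rcases Nat.eq_zero_or_pos s with h | h
    · subst h; exact le_sup_left
    · exact le_sup_of_le_right (le_mmPlus_of A h (le_of_lt (Finset.mem_range.mp hs)) k p)
  · refine sup_le ?_ (plus_le_star A k p)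
    have hpos : 0 < Fintype.card α := Fintype.card_pos_iff.mpr ⟨k⟩
    exact le_mmStar_of A hpos k p

lemma mul_star_eq_plus (A : Matrix α α B) : mmMul A (mmStar A) = mmPlus A := by
  funext k p
  apply le_antisymm
  · refine iSup_le fun z => ?_
    have : A k z ⊓ mmStar A z p = ⨆ s ∈ Finset.range (Fintype.card α), A k z ⊓ mmPow A s z p := by
      show A k z ⊓ (⨆ s ∈ Finset.range (Fintype.card α), mmPow A s z p) = _
      simp only [inf_iSup_eq]
    rw [this]
    refine iSup₂_le fun s hs => ?_
    have h1 : A k z ⊓ mmPow A s z p ≤ mmPow A (s + 1) k p := by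
      show _ ≤ ⨆ z', A k z' ⊓ mmPow A s z' p
      exact le_iSup_of_le z le_rfl
    exact le_trans h1 (le_mmPlus_of A (by omega) (Finset.mem_range.mp hs) k p)
  · refine iSup₂_le fun s hs => ?_
    obtain ⟨h1, h2⟩ := Finset.mem_Icc.mp hs
    obtain ⟨s', rfl⟩ : ∃ s', s = s' + 1 := ⟨s - 1, by omega⟩
    show (⨆ z, A k z ⊓ mmPow A s' z p) ≤ _
    refine iSup_le fun z => ?_
    exact le_iSup_of_le z (inf_le_inf_left _ (le_mmStar_of A (show s' < Fintype.card α by omega) z p))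
end PathMachinery2
section SolutionTheory

open Finset

variable {α : Type*} [DecidableEq α] [Fintype α]

/-- Row-wise maximum of `A*_λ`: the largest `λ`-bounded fixed point of `w = A ⊗ w`. -/
def wmaxV (A : Matrix α α B) (lam : B) : α → B := fun k => ⨆ i, mmStarLam A lam k i

lemma mmStarLam_apply (A : Matrix α α B) (lam : B) (k i : α) :
    mmStarLam A lam k i = lam ⊓ mmPlus A i i ⊓ mmStar A k i := rfl

lemma wmaxV_le_lam (A : Matrix α α B) (lam : B) (k : α) : wmaxV A lam k ≤ lam :=
  iSup_le fun _ => le_trans inf_le_left inf_le_left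

lemma wmaxV_eig (A : Matrix α α B) (lam : B) : mmVec A (wmaxV A lam) = wmaxV A lam := by
  funext k
  have h1 : mmVec A (wmaxV A lam) k = ⨆ i, lam ⊓ mmPlus A i i ⊓ mmPlus A k i := by
    show (⨆ p, A k p ⊓ ⨆ i, (lam ⊓ mmPlus A i i ⊓ mmStar A p i)) = _
    simp only [inf_iSup_eq]
    rw [iSup_comm]
    refine iSup_congr fun i => ?_
    have e : ∀ p, A k p ⊓ (lam ⊓ mmPlus A i i ⊓ mmStar A p i)
        = (lam ⊓ mmPlus A i i) ⊓ (A k p ⊓ mmStar A p i) := fun p => inf_left_comm _ _ _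
    simp only [e]
    rw [← inf_iSup_eq]
    have e2 : (⨆ p, A k p ⊓ mmStar A p i) = mmPlus A k i :=
      congrFun (congrFun (mul_star_eq_plus A) k) i
    rw [e2]
  rw [h1]
  show _ = ⨆ i, lam ⊓ mmPlus A i i ⊓ mmStar A k i
  apply le_antisymm
  · exact iSup_mono fun i => inf_le_inf_left _ (plus_le_star A k i)
  · refine iSup_le fun i => ?_
    by_cases h : k = i
    · subst h
      refine le_iSup_of_le k ?_
      calc lam ⊓ mmPlus A k k ⊓ mmStar A k k ≤ lam ⊓ mmPlus A k k := inf_le_left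
        _ = lam ⊓ mmPlus A k k ⊓ mmPlus A k k := by rw [inf_assoc, inf_idem]
  
    · refine le_iSup_of_le i (inf_le_inf_left _ ?_)
      rw [star_eq_sup]
      simp [mmId, h, B_zero_bot]

/-- Minimal solution `A* ⊗ c` of `u = A ⊗ u ⊕ c`. -/
def ubarV (A : Matrix α α B) (c : α → B) : α → B := mmVec (mmStar A) c

lemma ubarV_le_lam (A : Matrix α α B) {lam : B} {c : α → B} (hc : ∀ k, c k ≤ lam) (k : α) :
    ubarV A c k ≤ lam := mmVec_le _ hc _

lemma ubarV_sol (A : Matrix α α B) (c : α → B) (k : α) :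
    mmVec A (ubarV A c) k ⊔ c k = ubarV A c k := by
  have h1 : mmVec A (ubarV A c) = mmVec (mmPlus A) c := by
    show mmVec A (mmVec (mmStar A) c) = _
    rw [← mmVec_mmMul, mul_star_eq_plus]
  rw [h1]
  show _ = mmVec (mmStar A) c k
  have h2 : mmVec (mmStar A) c k = ⨆ p, (mmId α k p ⊔ mmPlus A k p) ⊓ c p := by
    refine iSup_congr fun p => ?_
    rw [star_eq_sup]
  rw [h2]
  simp only [inf_sup_right, iSup_sup_eq]
  have h3 : (⨆ p, mmId α k p ⊓ c p) = c k := congrFun (mmVec_id c) k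
  rw [h3, sup_comm]
  rfl

/-- The maximal `λ`-bounded solution of `u = A ⊗ u ⊕ c`. -/
def uhatV (A : Matrix α α B) (lam : B) (c : α → B) : α → B :=
  fun k => ubarV A c k ⊔ wmaxV A lam k

lemma uhatV_le_lam (A : Matrix α α B) {lam : B} {c : α → B} (hc : ∀ k, c k ≤ lam) (k : α) :
    uhatV A lam c k ≤ lam := sup_le (ubarV_le_lam A hc k) (wmaxV_le_lam A lam k)

lemma uhatV_sol (A : Matrix α α B) (lam : B) (c : α → B) (k : α) :
    mmVec A (uhatV A lam c) k ⊔ c k = uhatV A lam c k := by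
  have h1 : mmVec A (uhatV A lam c) k = mmVec A (ubarV A c) k ⊔ wmaxV A lam k := by
    have : uhatV A lam c = fun j => ubarV A c j ⊔ wmaxV A lam j := rfl
    rw [this, mmVec_sup]
    show mmVec A (ubarV A c) k ⊔ mmVec A (wmaxV A lam) k = _
    rw [congrFun (wmaxV_eig A lam) k]
  rw [h1, sup_right_comm, ubarV_sol]
  rfl

lemma sol_le_uhatV (A : Matrix α α B) {lam : B} {c : α → B} (u : α → B)
    (hu : ∀ k, u k ≤ lam) (hsol : ∀ k, mmVec A u k ⊔ c k = u k) (k : α) :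
    u k ≤ uhatV A lam c k := by
  have iter : ∀ t (k : α),
      u k ≤ mmVec (mmPow A t) u k ⊔ ⨆ s ∈ Finset.range t, mmVec (mmPow A s) c k := by
    intro t
    induction t with
    | zero =>
        intro k
        have : mmPow A 0 = mmId α := rfl
        rw [this, mmVec_id]
        exact le_sup_left
    | succ t ih =>
        intro k
        refine le_trans (ih k) (sup_le ?_ ?_)
        · have e0 : mmVec (mmPow A t) u k
              = mmVec (mmPow A (t+1)) u k ⊔ mmVec (mmPow A t) c k := by
            have e1 : u = fun p => mmVec A u p ⊔ c p := by
              funext p; exact (hsol p).symm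
            conv_lhs => rw [e1]
            rw [mmVec_sup]
            have e2 : mmVec (mmPow A t) (mmVec A u) = mmVec (mmPow A (t+1)) u := by
              rw [← mmVec_mmMul, ← mmPow_succ_right]
            rw [e2]
          rw [e0]
          refine sup_le le_sup_left (le_sup_of_le_right ?_)
          exact le_biSup (fun s => mmVec (mmPow A s) c k) (Finset.mem_range.mpr (Nat.lt_succ_self t))
        · refine le_sup_of_le_right ?_
          refine iSup₂_le fun s hs => ?_
          exact le_biSup (fun s => mmVec (mmPow A s) c k)
            (Finset.mem_range.mpr (lt_trans (Finset.mem_range.mp hs) (Nat.lt_succ_self t)))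
  have h1 := iter (Fintype.card α) k
  have h2 : (⨆ s ∈ Finset.range (Fintype.card α), mmVec (mmPow A s) c k) = ubarV A c k := by
    show _ = ⨆ p, mmStar A k p ⊓ c p
    apply le_antisymm
    · refine iSup₂_le fun s hs => ?_
      exact iSup_mono fun p => inf_le_inf_right _ (le_mmStar_of A (Finset.mem_range.mp hs) k p)
    · refine iSup_le fun p => ?_
      have e : mmStar A k p ⊓ c p
          = ⨆ s ∈ Finset.range (Fintype.card α), mmPow A s k p ⊓ c p := by
        show (⨆ s ∈ Finset.range (Fintype.card α), mmPow A s k p) ⊓ c p = _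
        simp only [iSup_inf_eq]
      rw [e]
      refine iSup₂_le fun s hs => ?_
      refine le_trans (le_iSup (fun p' => mmPow A s k p' ⊓ c p') p) ?_
      exact le_biSup (fun s => mmVec (mmPow A s) c k) hs
  have h3 : mmVec (mmPow A (Fintype.card α)) u k ≤ wmaxV A lam k := by
    refine iSup_le fun p => ?_
    have hb : mmPow A (Fintype.card α) k p ⊓ u p
        ≤ (⨆ i, mmStar A k i ⊓ mmPlus A i i) ⊓ lam :=
      inf_le_inf (pow_card_le_wmax A k p) (hu p)
    refine le_trans hb ?_
    rw [iSup_inf_eq]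
    refine iSup_mono fun i => le_of_eq ?_
    rw [mmStarLam_apply]
    rw [inf_comm (mmStar A k i ⊓ mmPlus A i i) lam, inf_comm (mmStar A k i) (mmPlus A i i),
      ← inf_assoc]
  refine le_trans h1 (sup_le (le_trans h3 le_sup_right) ?_)
  rw [h2]
  exact le_sup_left

end SolutionTheory
section Assembly

open Finset

variable {n : ℕ}

/-- The constant term `c_k = λ ⊓ max_{ℓ∈L} a_{kℓ}` of the reduced system on `K`. -/
def cKL (A : Matrix (Fin n) (Fin n) B) (lam : B) (K L : Finset (Fin n)) : ↥K → B :=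
  fun k => lam ⊓ ⨆ ℓ : ↥L, A ↑k ↑ℓ

lemma mem_L_of_not_K {K L : Finset (Fin n)} (hU : K ∪ L = Finset.univ)
    {j : Fin n} (h : j ∉ K) : j ∈ L := by
  have hj := Finset.mem_univ j
  rw [← hU, Finset.mem_union] at hj
  exact hj.resolve_left h

lemma notMem_K_of_L {K L : Finset (Fin n)} (hD : Disjoint K L)
    {j : Fin n} (h : j ∈ L) : j ∉ K :=
  fun hK => (Finset.disjoint_left.mp hD) hK h

lemma iSup_splitKL {K L : Finset (Fin n)} (hU : K ∪ L = Finset.univ) (f : Fin n → B) :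
    (⨆ j, f j) = (⨆ j : ↥K, f ↑j) ⊔ (⨆ j : ↥L, f ↑j) := by
  apply le_antisymm
  · refine iSup_le fun j => ?_
    by_cases h : j ∈ K
    · exact le_sup_of_le_left (le_iSup (fun j : ↥K => f ↑j) ⟨j, h⟩)
    · exact le_sup_of_le_right (le_iSup (fun j : ↥L => f ↑j) ⟨j, mem_L_of_not_K hU h⟩)
  · exact sup_le (iSup_le fun j => le_iSup f ↑j) (iSup_le fun j => le_iSup f ↑j)

lemma biSup_subtype (s : Finset (Fin n)) (f : Fin n → B) :
    (⨆ j ∈ s, f j) = ⨆ j : ↥s, f ↑j := by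
  apply le_antisymm
  · exact iSup₂_le fun j hj => le_iSup (fun j : ↥s => f ↑j) ⟨j, hj⟩
  · exact iSup_le fun j => le_iSup₂ (f := fun j _ => f j) (↑j : Fin n) j.2

lemma exists_eig_iff_system (A : Matrix (Fin n) (Fin n) B) (lam : B) (K L : Finset (Fin n))
    (hU : K ∪ L = Finset.univ) (hD : Disjoint K L) :
    (∃ x, IsKLEig A lam K L x) ↔
      ∃ u : ↥K → B, (∀ k, u k ≤ lam) ∧
        (∀ k, mmVec (subM A K K) u k ⊔ cKL A lam K L k = u k) ∧
        (∀ i : ↥(L2set A lam L), lam ≤ ⨆ k : ↥K, A ↑i ↑k ⊓ u k) := by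
  constructor
  · rintro ⟨x, heq, hK, hL⟩
    refine ⟨fun k => x ↑k, fun k => hK ↑k k.2, ?_, ?_⟩
    · intro k
      have hrow : mmVec A x ↑k = lam ⊓ x ↑k := congrFun heq ↑k
      have hxk : lam ⊓ x ↑k = x ↑k := inf_eq_right.mpr (hK ↑k k.2)
      rw [hxk] at hrow
      have hterm : ∀ j : ↥L, A ↑k ↑j ⊓ x ↑j = lam ⊓ A ↑k ↑j := by
        intro j
        have hle : A ↑k ↑j ⊓ x ↑j ≤ lam := by
          have h1 : A ↑k ↑j ⊓ x ↑j ≤ mmVec A x ↑k :=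
            le_iSup (fun j' => A ↑k j' ⊓ x j') (↑j : Fin n)
          rw [hrow] at h1
          exact le_trans h1 (hK ↑k k.2)
        rcases le_total (A ↑k ↑j) lam with h | h
        · have h2 : A ↑k ↑j ⊓ x ↑j = A ↑k ↑j :=
            inf_eq_left.mpr (le_trans h (hL ↑j j.2))
          rw [h2, inf_eq_right.mpr h]
        · have h1 : lam ≤ A ↑k ↑j ⊓ x ↑j := le_inf h (hL ↑j j.2)
          rw [le_antisymm hle h1, inf_eq_left.mpr h]
      have hmain : mmVec A x ↑k = mmVec (subM A K K) (fun k => x ↑k) k ⊔ cKL A lam K L k := by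
        have h0 : mmVec A x ↑k = ⨆ j, A ↑k j ⊓ x j := rfl
        rw [h0, iSup_splitKL hU]
        congr 1
        show (⨆ j : ↥L, A ↑k ↑j ⊓ x ↑j) = lam ⊓ ⨆ ℓ : ↥L, A ↑k ↑ℓ
        rw [inf_iSup_eq]
        exact iSup_congr hterm
      rw [← hmain, hrow]
    · intro i
      have hiL2 := i.2
      simp only [L2set, Finset.mem_filter] at hiL2
      obtain ⟨hiL, hlt⟩ := hiL2
      have hrow : mmVec A x ↑i = lam ⊓ x ↑i := congrFun heq ↑i
      have hxi : lam ⊓ x ↑i = lam := inf_eq_left.mpr (hL ↑i hiL)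
      rw [hxi] at hrow
      have hLpart : (⨆ j : ↥L, A ↑i ↑j ⊓ x ↑j) < lam := by
        refine lt_of_le_of_lt ?_ hlt
        rw [biSup_subtype L (fun j => A ↑i j)]
        exact iSup_mono fun j => inf_le_left
      have heqsup : (⨆ j : ↥K, A ↑i ↑j ⊓ x ↑j) ⊔ (⨆ j : ↥L, A ↑i ↑j ⊓ x ↑j) = lam := by
        rw [← iSup_splitKL hU (fun j => A ↑i j ⊓ x j)]
        exact hrow
      rcases le_sup_iff.mp (le_of_eq heqsup.symm) with h | h
      · exact h
      · exact absurd h (not_le_of_gt hLpart)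
  · rintro ⟨u, hu, hsol, hL2⟩
    classical
    set x : Fin n → B := fun j => if h : j ∈ K then u ⟨j, h⟩ else lam with hxdef
    have hxK : ∀ (j : Fin n) (h : j ∈ K), x j = u ⟨j, h⟩ := fun j h => dif_pos h
    have hxL : ∀ (j : Fin n), j ∈ L → x j = lam :=
      fun j hj => dif_neg (notMem_K_of_L hD hj)
    have hxle : ∀ j, x j ≤ lam := by
      intro j
      by_cases h : j ∈ K
      · rw [hxK j h]; exact hu _
      · show (if h : j ∈ K then u ⟨j, h⟩ else lam) ≤ lam
        rw [dif_neg h]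
    refine ⟨x, ?_, fun i h => hxle i, fun i h => le_of_eq (hxL i h).symm⟩
    funext i
    show mmVec A x i = lam ⊓ x i
    by_cases hiK : i ∈ K
    · have h1 : lam ⊓ x i = x i := inf_eq_right.mpr (hxle i)
      rw [h1]
      have h0 : mmVec A x i = ⨆ j, A i j ⊓ x j := rfl
      rw [h0, iSup_splitKL hU (fun j => A i j ⊓ x j)]
      have e1 : (⨆ j : ↥K, A i ↑j ⊓ x ↑j) = mmVec (subM A K K) u ⟨i, hiK⟩ := by
        refine iSup_congr fun j => ?_
        rw [hxK ↑j j.2]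
        rfl
      have e2 : (⨆ j : ↥L, A i ↑j ⊓ x ↑j) = cKL A lam K L ⟨i, hiK⟩ := by
        show _ = lam ⊓ ⨆ ℓ : ↥L, A i ↑ℓ
        rw [inf_iSup_eq]
        refine iSup_congr fun j => ?_
        rw [hxL ↑j j.2, inf_comm]
      rw [e1, e2, hsol ⟨i, hiK⟩, hxK i hiK]
    · have hiL : i ∈ L := mem_L_of_not_K hU hiK
      have h1 : lam ⊓ x i = lam := by rw [hxL i hiL, inf_idem]
      rw [h1]
      apply le_antisymm
      · exact mmVec_le A hxle i
      · by_cases hcase : lam ≤ ⨆ j ∈ L, A i j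
        · rw [biSup_subtype L (fun j => A i j)] at hcase
          calc lam = lam ⊓ ⨆ j : ↥L, A i ↑j := (inf_eq_left.mpr hcase).symm
            _ = ⨆ j : ↥L, lam ⊓ A i ↑j := by rw [inf_iSup_eq]
            _ = ⨆ j : ↥L, A i ↑j ⊓ x ↑j := iSup_congr fun j => by
                rw [hxL ↑j j.2, inf_comm]
            _ ≤ mmVec A x i := iSup_le fun j => le_iSup (fun j' => A i j' ⊓ x j') (↑j : Fin n)
        · have hiL2 : i ∈ L2set A lam L := by
            simp only [L2set, Finset.mem_filter]
            exact ⟨hiL, lt_of_not_ge hcase⟩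
          refine le_trans (hL2 ⟨i, hiL2⟩) ?_
          refine iSup_le fun k => ?_
          refine le_trans (le_of_eq ?_) (le_iSup (fun j' => A i j' ⊓ x j') (↑k : Fin n))
          rw [hxK ↑k k.2]

end Assembly
section FinalAssembly

open Finset

variable {n : ℕ}

lemma system_iff_uhat (A : Matrix (Fin n) (Fin n) B) (lam : B) (K L : Finset (Fin n)) :
    (∃ u : ↥K → B, (∀ k, u k ≤ lam) ∧
        (∀ k, mmVec (subM A K K) u k ⊔ cKL A lam K L k = u k) ∧
        (∀ i : ↥(L2set A lam L), lam ≤ ⨆ k : ↥K, A ↑i ↑k ⊓ u k)) ↔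
      (∀ i : ↥(L2set A lam L),
        lam ≤ ⨆ k : ↥K, A ↑i ↑k ⊓ uhatV (subM A K K) lam (cKL A lam K L) k) := by
  constructor
  · rintro ⟨u, hu, hsol, h⟩ i
    refine le_trans (h i) (iSup_mono fun k => inf_le_inf_left _ ?_)
    exact sol_le_uhatV (subM A K K) u hu hsol k
  · intro h
    exact ⟨uhatV (subM A K K) lam (cKL A lam K L),
      fun k => uhatV_le_lam _ (fun k => inf_le_left) k,
      uhatV_sol _ _ _, h⟩

lemma bprime_eq (A : Matrix (Fin n) (Fin n) B) (lam : B) (K L : Finset (Fin n))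
    (i : ↥(L2set A lam L)) :
    bprime A lam K L i
      = ⨆ k : ↥K, A ↑i ↑k ⊓ ubarV (subM A K K) (cKL A lam K L) k := by
  show lam ⊓ mmVec (mmMul (mmMul (subM A (L2set A lam L) K) (mmStar (subM A K K)))
      (subM A K L)) (fun _ => 1) i = _
  rw [mmVec_mmMul, mmVec_mmMul]
  have hd : mmVec (subM A K L) (fun _ => (1:B)) = fun p : ↥K => ⨆ ℓ : ↥L, A ↑p ↑ℓ := by
    funext p
    exact iSup_congr fun ℓ => inf_eq_left.mpr (B_le_one _)
  rw [hd]
  rw [congrFun (mmVec_scalar (subM A (L2set A lam L) K) lam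
    (mmVec (mmStar (subM A K K)) (fun p : ↥K => ⨆ ℓ : ↥L, A ↑p ↑ℓ))) i |>.symm]
  have h2 : (fun k : ↥K => lam ⊓ mmVec (mmStar (subM A K K))
        (fun p : ↥K => ⨆ ℓ : ↥L, A ↑p ↑ℓ) k)
      = ubarV (subM A K K) (cKL A lam K L) := by
    funext k
    show _ = mmVec (mmStar (subM A K K)) (cKL A lam K L) k
    have e : cKL A lam K L = fun p : ↥K => lam ⊓ ⨆ ℓ : ↥L, A ↑p ↑ℓ := rfl
    rw [e, mmVec_scalar]
  rw [h2]
  rfl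

lemma wmax_cols (A : Matrix (Fin n) (Fin n) B) (lam : B) (K L : Finset (Fin n))
    (i : ↥(L2set A lam L)) :
    (⨆ k : ↥K, A ↑i ↑k ⊓ wmaxV (subM A K K) lam k)
      = ⨆ q : ↥K, mmMul (subM A (L2set A lam L) K) (mmStarLam (subM A K K) lam) i q := by
  show (⨆ k : ↥K, A ↑i ↑k ⊓ ⨆ q, mmStarLam (subM A K K) lam k q)
      = ⨆ q : ↥K, ⨆ k, subM A (L2set A lam L) K i k ⊓ mmStarLam (subM A K K) lam k q
  simp only [inf_iSup_eq]
  rw [iSup_comm]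
  rfl

lemma ApK_le_lam (A : Matrix (Fin n) (Fin n) B) (lam : B) (K L : Finset (Fin n))
    (i : ↥(L2set A lam L)) (q : ↥K) :
    mmMul (subM A (L2set A lam L) K) (mmStarLam (subM A K K) lam) i q ≤ lam :=
  iSup_le fun k => le_trans inf_le_right (le_trans inf_le_left inf_le_left)

lemma Aprime_K_col (A : Matrix (Fin n) (Fin n) B) (lam : B) (K L : Finset (Fin n))
    (hD : Disjoint K L) (i : ↥(L2set A lam L)) (j : ↥(NtilSet A lam K L))
    (hj : (j : Fin n) ∈ K) :
    Aprime A lam K L i j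
      = mmMul (subM A (L2set A lam L) K) (mmStarLam (subM A K K) lam) i ⟨(j : Fin n), hj⟩ := by
  have hnot : (j : Fin n) ∉ LtilSet A lam K L := by
    intro hmem
    have hL : (j : Fin n) ∈ L := (Finset.mem_sdiff.mp hmem).1
    exact notMem_K_of_L hD hL hj
  unfold Aprime
  rw [dif_neg hnot]

lemma Aprime_Ltil_col_lt (A : Matrix (Fin n) (Fin n) B) (lam : B) (K L : Finset (Fin n))
    (i : ↥(L2set A lam L)) (j : ↥(NtilSet A lam K L))
    (hj : (j : Fin n) ∈ LtilSet A lam K L) (hb : bprime A lam K L i < lam) :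
    Aprime A lam K L i j < lam := by
  have hbot : ⊥ < lam := lt_of_le_of_lt bot_le hb
  have hb2 : ∀ ℓ : ↥(LtilSet A lam K L),
      lam ⊓ mmMul (mmMul (subM A (L2set A lam L) K) (mmStar (subM A K K)))
        (subM A K (LtilSet A lam K L)) i ℓ ≤ bprime A lam K L i := by
    intro ℓ
    have hℓL : (ℓ : Fin n) ∈ L := (Finset.mem_sdiff.mp ℓ.2).1
    have e : mmMul (mmMul (subM A (L2set A lam L) K) (mmStar (subM A K K)))
          (subM A K (LtilSet A lam K L)) i ℓ
        = mmMul (mmMul (subM A (L2set A lam L) K) (mmStar (subM A K K)))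
          (subM A K L) i ⟨↑ℓ, hℓL⟩ := rfl
    rw [e]
    show _ ≤ lam ⊓ mmVec (mmMul (mmMul (subM A (L2set A lam L) K) (mmStar (subM A K K)))
      (subM A K L)) (fun _ => 1) i
    refine inf_le_inf_left lam ?_
    refine le_trans (le_of_eq (inf_eq_left.mpr (B_le_one _)).symm) ?_
    exact le_iSup (fun ℓ' : ↥L => mmMul (mmMul (subM A (L2set A lam L) K)
      (mmStar (subM A K K))) (subM A K L) i ℓ' ⊓ 1) ⟨↑ℓ, hℓL⟩
  unfold Aprime
  rw [dif_pos hj]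
  refine iSup_lt_of_lt hbot fun ℓ => ?_
  have hMlt : mmMul (mmMul (subM A (L2set A lam L) K) (mmStar (subM A K K)))
      (subM A K (LtilSet A lam K L)) i ℓ < lam := by
    by_contra hge
    push_neg at hge
    have : lam ≤ bprime A lam K L i := by
      refine le_trans (le_of_eq ?_) (hb2 ℓ)
      exact (inf_eq_left.mpr hge).symm
    exact absurd (lt_of_le_of_lt this hb) (lt_irrefl lam)
  by_cases hc : (ℓ : Fin n) = ((⟨(j : Fin n), hj⟩ : ↥(LtilSet A lam K L)) : Fin n)
  · have e : LamSub lam (LtilSet A lam K L) (LtilSet A lam K L) ℓ ⟨(j : Fin n), hj⟩ = 1 := by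
      unfold LamSub
      rw [if_pos hc]
    rw [e, inf_eq_left.mpr (B_le_one _)]
    exact hMlt
  · have e : LamSub lam (LtilSet A lam K L) (LtilSet A lam K L) ℓ ⟨(j : Fin n), hj⟩ = lam := by
      unfold LamSub
      rw [if_neg hc]
    rw [e]
    calc _ ≤ lam ⊓ mmMul (mmMul (subM A (L2set A lam L) K) (mmStar (subM A K K)))
          (subM A K (LtilSet A lam K L)) i ℓ := le_of_eq (inf_comm _ _)
      _ ≤ bprime A lam K L i := hb2 ℓ
      _ < lam := hb

lemma set_eq_iff (A : Matrix (Fin n) (Fin n) B) (lam : B) (K L : Finset (Fin n)) :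
    (I0set A lam K L = ⋃ j : ↥(NtilSet A lam K L), CsetKL A lam K L j)
      ↔ ∀ i : ↥(L2set A lam L), bprime A lam K L i < lam →
          ∃ j, Aprime A lam K L i j = lam := by
  constructor
  · intro h i hi
    have hmem : i ∈ I0set A lam K L := hi
    rw [h, Set.mem_iUnion] at hmem
    obtain ⟨j, hj⟩ := hmem
    exact ⟨j, hj.2⟩
  · intro h
    ext i
    simp only [I0set, CsetKL, Set.mem_iUnion, Set.mem_setOf_eq]
    constructor
    · intro hi
      obtain ⟨j, hj⟩ := h i hi
      exact ⟨j, hi, hj⟩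
    · rintro ⟨j, hj, _⟩
      exact hj

end FinalAssembly
/-- A `(K,L)` `λ`-eigenvector of `A` exists iff `I₀ = ∪_{j ∈ Ñ} C_j`. -/
theorem stmt17 {n : ℕ} (A : Matrix (Fin n) (Fin n) B) (lam : B) (K L : Finset (Fin n))
    (hU : K ∪ L = Finset.univ) (hD : Disjoint K L) :
    (∃ x : Fin n → B, IsKLEig A lam K L x) ↔
      I0set A lam K L = ⋃ j : ↥(NtilSet A lam K L), CsetKL A lam K L j := by
  rw [exists_eig_iff_system A lam K L hU hD, system_iff_uhat A lam K L,
    set_eq_iff A lam K L]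
  have hsplit : ∀ i : ↥(L2set A lam L),
      (⨆ k : ↥K, A ↑i ↑k ⊓ uhatV (subM A K K) lam (cKL A lam K L) k)
        = bprime A lam K L i
          ⊔ ⨆ q : ↥K, mmMul (subM A (L2set A lam L) K) (mmStarLam (subM A K K) lam) i q := by
    intro i
    rw [← wmax_cols A lam K L i, bprime_eq A lam K L i]
    simp only [uhatV, inf_sup_left, iSup_sup_eq]
  constructor
  · intro h i hb
    have hi := h i
    rw [hsplit i] at hi
    rcases le_sup_iff.mp hi with h1 | h1
    · exact absurd (le_antisymm inf_le_left h1) (ne_of_lt hb)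
    · have hbot : ⊥ < lam := lt_of_le_of_lt bot_le hb
      obtain ⟨q, hq⟩ := iSup_exists_le hbot h1
      have heq2 : mmMul (subM A (L2set A lam L) K) (mmStarLam (subM A K K) lam) i q = lam :=
        le_antisymm (ApK_le_lam A lam K L i q) hq
      refine ⟨⟨↑q, Finset.mem_union_right _ q.2⟩, ?_⟩
      rw [Aprime_K_col A lam K L hD i ⟨↑q, Finset.mem_union_right _ q.2⟩ q.2]
      exact heq2
  · intro h i
    rw [hsplit i]
    rcases lt_or_ge (bprime A lam K L i) lam with hb | hb
    · obtain ⟨j, hj⟩ := h i hb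
      rcases Finset.mem_union.mp j.2 with hjL | hjK
      · exact absurd hj (ne_of_lt (Aprime_Ltil_col_lt A lam K L i j hjL hb))
      · refine le_sup_of_le_right ?_
        refine le_trans (le_of_eq hj.symm) ?_
        rw [Aprime_K_col A lam K L hD i j hjK]
        exact le_iSup (fun q : ↥K => mmMul (subM A (L2set A lam L) K)
          (mmStarLam (subM A K K) lam) i q) ⟨↑j, hjK⟩
    · exact le_sup_of_le_left hb
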